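/- If F is a concise homogeneous form of degree d in n variables over ℂ that is a direct sum, then the apolar ideal F^⊥ has at least n − 1 minimal generators of degree 2, i.e. dim_ℂ (F^⊥/mF^⊥)_2 ≥ n − 1. -/

import Mathlib

/-!
Apolarity setup.  `S = ℂ[x_1,…,x_n]` and its dual ring `T = ℂ[α_1,…,α_n]` are both
realized as `MvPolynomial (Fin n) ℂ`; the apolarity action `Θ ⌟ F` (`contract Θ F`)
lets `α_i` act as the partial differentiation operator `∂/∂x_i`.
-/

open MvPolynomial

noncomputable section Apolarity

/-- Partial derivatives on `ℂ[x_1,…,x_n]` commute. -/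
lemma pderiv_pderiv_comm (n : ℕ) (i j : Fin n) (f : MvPolynomial (Fin n) ℂ) :
    pderiv i (pderiv j f) = pderiv j (pderiv i f) := by
  induction f using MvPolynomial.induction_on with
  | C a => simp
  | add p q hp hq => simp [hp, hq]
  | mul_X p k hp =>
    rcases eq_or_ne i k with rfl | hik
    · rcases eq_or_ne j i with rfl | hjk
      · rfl
      · simp only [pderiv_mul, pderiv_X_self, pderiv_X_of_ne hjk, pderiv_X_of_ne hjk.symm,
          map_add, map_zero, map_one, Derivation.map_one_eq_zero, mul_one, mul_zero,
          add_zero, zero_add, hp]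
    · rcases eq_or_ne j k with rfl | hjk
      · simp only [pderiv_mul, pderiv_X_self, pderiv_X_of_ne hik, pderiv_X_of_ne hik.symm,
          map_add, map_zero, map_one, Derivation.map_one_eq_zero, mul_one, mul_zero,
          add_zero, zero_add, hp]
      · simp only [pderiv_mul, pderiv_X_of_ne hik.symm, pderiv_X_of_ne hjk.symm, map_add,
          map_zero, mul_zero, add_zero, zero_add, hp]

variable (n : ℕ)

/-- The endomorphism `∂/∂x_i` of `S = ℂ[x_1,…,x_n]`. -/
def derOp (i : Fin n) : Module.End ℂ (MvPolynomial (Fin n) ℂ) :=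
  (pderiv i).toLinearMap

lemma derOp_commute (i j : Fin n) : Commute (derOp n i) (derOp n j) :=
  LinearMap.ext fun f => pderiv_pderiv_comm n i j f

/-- The commuting product of the operators `(∂/∂x_i)^(m i)`. -/
def piDiffHom : (Fin n → Multiplicative ℕ) →* Module.End ℂ (MvPolynomial (Fin n) ℂ) :=
  MonoidHom.noncommPiCoprod (fun i : Fin n => powersHom _ (derOp n i))
    (fun i j _ x y => ((derOp_commute n i j).pow_pow x y))

/-- The differential operator `∏ i, (∂/∂x_i)^(m i)` attached to an exponent vector `m`. -/
def diffMonoidHom : Multiplicative (Fin n →₀ ℕ) →* Module.End ℂ (MvPolynomial (Fin n) ℂ) :=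
  (piDiffHom n).comp
    (AddMonoidHom.toMultiplicative
      (Finsupp.coeFnAddHom : (Fin n →₀ ℕ) →+ (Fin n → ℕ)))

/-- The apolarity action of the dual ring `T = ℂ[α_1,…,α_n]` on `S = ℂ[x_1,…,x_n]`, as an
algebra homomorphism to differential operators: `α_i` acts as `∂/∂x_i`. -/
def apolarAlgHom :
    MvPolynomial (Fin n) ℂ →ₐ[ℂ] Module.End ℂ (MvPolynomial (Fin n) ℂ) :=
  AddMonoidAlgebra.lift ℂ _ (Fin n →₀ ℕ) (diffMonoidHom n)

variable {n}

/-- The apolarity action `Θ ⌟ F`: apply to `F` the differential operator obtained from `Θ`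
by substituting `∂/∂x_i` for the `i`-th (dual) variable. -/
def contract (Θ F : MvPolynomial (Fin n) ℂ) : MvPolynomial (Fin n) ℂ :=
  apolarAlgHom n Θ F

lemma apolarAlgHom_X (i : Fin n) : apolarAlgHom n (X i) = derOp n i := by
  classical
  have hX : (X i : MvPolynomial (Fin n) ℂ)
      = AddMonoidAlgebra.single (Finsupp.single i 1) (1 : ℂ) := rfl
  rw [hX]
  rw [show apolarAlgHom n (AddMonoidAlgebra.single (Finsupp.single i 1) (1:ℂ))
      = (1:ℂ) • diffMonoidHom n (Multiplicative.ofAdd (Finsupp.single i 1)) from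
    AddMonoidAlgebra.lift_single _ _ _]
  rw [one_smul]
  show piDiffHom n ((AddMonoidHom.toMultiplicative
      (Finsupp.coeFnAddHom : (Fin n →₀ ℕ) →+ (Fin n → ℕ)))
      (Multiplicative.ofAdd (Finsupp.single i 1))) = derOp n i
  have harg : (AddMonoidHom.toMultiplicative
        (Finsupp.coeFnAddHom : (Fin n →₀ ℕ) →+ (Fin n → ℕ)))
        (Multiplicative.ofAdd (Finsupp.single i 1))
      = Pi.mulSingle (M := fun _ : Fin n => Multiplicative ℕ) i (Multiplicative.ofAdd 1) := by
    funext j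
    rcases eq_or_ne j i with rfl | hj
    · show Multiplicative.ofAdd ((Finsupp.single j 1 : Fin n →₀ ℕ) j)
        = Pi.mulSingle (M := fun _ : Fin n => Multiplicative ℕ) j (Multiplicative.ofAdd 1) j
      rw [Finsupp.single_eq_same, Pi.mulSingle_eq_same]
    · show Multiplicative.ofAdd ((Finsupp.single i 1 : Fin n →₀ ℕ) j)
        = Pi.mulSingle (M := fun _ : Fin n => Multiplicative ℕ) i (Multiplicative.ofAdd 1) j
      rw [Finsupp.single_eq_of_ne (by first | exact hj | exact hj.symm), Pi.mulSingle_eq_of_ne hj]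
      exact ofAdd_zero
  refine (congrArg (piDiffHom n) harg).trans ?_
  rw [piDiffHom]
  first
  | (erw [MonoidHom.noncommPiCoprod_mulSingle]; rfl)
  | exact (MonoidHom.noncommPiCoprod_mulSingle _ _ _ _).trans rfl

/-- Sanity check: the dual variable `α_i` acts on `F` as `∂F/∂x_i`. -/
@[simp] lemma contract_X (i : Fin n) (F : MvPolynomial (Fin n) ℂ) :
    contract (X i) F = pderiv i F := by
  rw [contract, apolarAlgHom_X]; rfl

/-- The apolar (annihilator) ideal `F^⊥ = {Θ ∈ T : Θ ⌟ F = 0}` of a polynomial `F`. -/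
def apolarIdeal (F : MvPolynomial (Fin n) ℂ) : Ideal (MvPolynomial (Fin n) ℂ) where
  carrier := {Θ | contract Θ F = 0}
  zero_mem' := by simp [contract]
  add_mem' := by
    intro a b ha hb
    simp only [Set.mem_setOf_eq, contract, map_add, LinearMap.add_apply] at *
    rw [ha, hb, add_zero]
  smul_mem' := by
    intro c x hx
    simp only [Set.mem_setOf_eq, smul_eq_mul, contract, map_mul, Module.End.mul_apply] at *
    rw [hx, map_zero]

@[simp] lemma mem_apolarIdeal {Θ F : MvPolynomial (Fin n) ℂ} :
    Θ ∈ apolarIdeal F ↔ contract Θ F = 0 := Iff.rfl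

variable (n)

/-- The irrelevant maximal ideal `m = ⟨α_1,…,α_n⟩` of `T`. -/
def irrIdeal : Ideal (MvPolynomial (Fin n) ℂ) :=
  Ideal.span (Set.range X)

variable {n}

/-- The homogeneous ideal `I` has a minimal generator of degree `k`, i.e. `(I/mI)_k ≠ 0`:
there is a homogeneous element of `I` of degree `k` not belonging to `m * I`. -/
def HasMinGenOfDegree (I : Ideal (MvPolynomial (Fin n) ℂ)) (k : ℕ) : Prop :=
  ∃ Θ, Θ ∈ I ∧ Θ.IsHomogeneous k ∧ Θ ∉ irrIdeal n * I

/-- The homogeneous ideal `I` has at least `r` minimal generators of degree `k`, i.e.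
`dim_ℂ (I/mI)_k ≥ r`: there are `r` homogeneous degree-`k` elements of `I` that are
linearly independent modulo `m * I`. -/
def MinGensAtLeast (I : Ideal (MvPolynomial (Fin n) ℂ)) (k r : ℕ) : Prop :=
  ∃ Θ : Fin r → MvPolynomial (Fin n) ℂ,
    (∀ i, Θ i ∈ I ∧ (Θ i).IsHomogeneous k) ∧
    ∀ c : Fin r → ℂ, (∑ i, c i • Θ i) ∈ irrIdeal n * I → ∀ i, c i = 0

/-- `F` is an `s`-fold direct sum of degree `d`: `F = F_1 + ⋯ + F_s` where the `F_i` are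
nonzero degree-`d` forms in independent subspaces `V_i` of the space of linear forms with
`V = V_1 ⊕ ⋯ ⊕ V_s` (i.e. in disjoint sets of variables, up to linear change of variables;
`F_i ∈ S^d V_i` is expressed as membership in the subalgebra generated by `V_i`). -/
def IsSFoldDirectSum (F : MvPolynomial (Fin n) ℂ) (d s : ℕ) : Prop :=
  ∃ (V : Fin s → Submodule ℂ (MvPolynomial (Fin n) ℂ))
    (G : Fin s → MvPolynomial (Fin n) ℂ),
    (∀ i, V i ≤ homogeneousSubmodule (Fin n) ℂ 1) ∧
    iSupIndep V ∧
    (⨆ i, V i) = homogeneousSubmodule (Fin n) ℂ 1 ∧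
    (∀ i, G i ≠ 0 ∧ (G i).IsHomogeneous d ∧ G i ∈ Algebra.adjoin ℂ (V i : Set _)) ∧
    F = ∑ i, G i

/-- `F` is a direct sum: `F = F₁ + F₂` with `F₁ ∈ S^d V₁`, `F₂ ∈ S^d V₂` nonzero and
`V = V₁ ⊕ V₂`. -/
def IsDirectSum (F : MvPolynomial (Fin n) ℂ) (d : ℕ) : Prop :=
  IsSFoldDirectSum F d 2

/-- `F` is a limit (as `t → 0`) of `s`-fold direct sums of degree `d`. -/
def IsLimitOfSFoldDirectSums (F : MvPolynomial (Fin n) ℂ) (d s : ℕ) : Prop :=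
  ∃ G : ℂ → MvPolynomial (Fin n) ℂ,
    (∀ t : ℂ, t ≠ 0 → IsSFoldDirectSum (G t) d s) ∧
    ∀ m : Fin n →₀ ℕ,
      Filter.Tendsto (fun t => MvPolynomial.coeff m (G t))
        (nhdsWithin (0 : ℂ) {(0 : ℂ)}ᶜ) (nhds (MvPolynomial.coeff m F))

/-- `F` is a limit of direct sums. -/
def IsLimitOfDirectSums (F : MvPolynomial (Fin n) ℂ) (d : ℕ) : Prop :=
  IsLimitOfSFoldDirectSums F d 2

/-- `F` is concise: `(F^⊥)_1 = 0`, i.e. `F` cannot be written using fewer variables. -/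
def Concise (F : MvPolynomial (Fin n) ℂ) : Prop :=
  ∀ Θ : MvPolynomial (Fin n) ℂ, Θ.IsHomogeneous 1 → contract Θ F = 0 → Θ = 0

end Apolarity

noncomputable section Aux
open MvPolynomial

variable {n : ℕ}

lemma contract_addl (a b F : MvPolynomial (Fin n) ℂ) :
    contract (a + b) F = contract a F + contract b F := by
  simp [contract, map_add]

lemma contract_smull (c : ℂ) (a F : MvPolynomial (Fin n) ℂ) :
    contract (c • a) F = c • contract a F := by
  simp [contract, map_smul]

lemma contract_mull (a b F : MvPolynomial (Fin n) ℂ) :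
    contract (a * b) F = contract a (contract b F) := by
  simp [contract, map_mul]

lemma contract_C (c : ℂ) (F : MvPolynomial (Fin n) ℂ) :
    contract (C c) F = c • F := by
  have : (C c : MvPolynomial (Fin n) ℂ) = algebraMap ℂ _ c := rfl
  rw [contract, this, AlgHom.commutes]
  rfl

lemma contract_addr (a F G : MvPolynomial (Fin n) ℂ) :
    contract a (F + G) = contract a F + contract a G := by
  simp [contract, map_add]

lemma contract_suml {ι : Type*} (s : Finset ι) (f : ι → MvPolynomial (Fin n) ℂ)
    (F : MvPolynomial (Fin n) ℂ) :
    contract (∑ i ∈ s, f i) F = ∑ i ∈ s, contract (f i) F := by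
  simp [contract, map_sum]

/-- The linear form `∑ w i • X i`. -/
def lin (w : Fin n → ℂ) : MvPolynomial (Fin n) ℂ := ∑ i, w i • X i

lemma lin_mem_hs1 (w : Fin n → ℂ) : lin w ∈ homogeneousSubmodule (Fin n) ℂ 1 :=
  Submodule.sum_mem _ fun i _ => Submodule.smul_mem _ _ ((mem_homogeneousSubmodule _ _).2 (isHomogeneous_X ℂ i))

lemma lin_isHomogeneous (w : Fin n → ℂ) : (lin w).IsHomogeneous 1 :=
  (mem_homogeneousSubmodule _ _).1 (lin_mem_hs1 w)

lemma coeff_lin (w : Fin n → ℂ) (i : Fin n) :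
    coeff (Finsupp.single i 1) (lin w) = w i := by
  rw [lin, coeff_sum]
  rw [Finset.sum_eq_single i]
  · simp [coeff_smul, coeff_X]
  · intro j _ hji
    have : coeff (Finsupp.single i 1) (X j : MvPolynomial (Fin n) ℂ) = 0 := by
      rw [coeff_X']
      simp only [ite_eq_right_iff]
      intro h
      exact absurd ((Finsupp.single_left_inj one_ne_zero).1 h) hji
    simp [coeff_smul, this]
  · simp

lemma lin_add (v w : Fin n → ℂ) : lin (v + w) = lin v + lin w := by
  simp [lin, add_smul, Finset.sum_add_distrib]

lemma degree_one_eq_single {m : Fin n →₀ ℕ} (h : m.degree = 1) :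
    ∃ i, m = Finsupp.single i 1 := by
  have hm : m ≠ 0 := by
    intro h0; rw [h0] at h; simp at h
  obtain ⟨i, hi⟩ := Finsupp.ne_iff.1 hm
  simp only [Finsupp.coe_zero, Pi.zero_apply] at hi
  have hmem : i ∈ m.support := Finsupp.mem_support_iff.2 hi
  refine ⟨i, ?_⟩
  have hle : m i ≤ m.degree := Finset.single_le_sum (fun j _ => Nat.zero_le (m j)) hmem
  have hmi : m i = 1 := le_antisymm (h ▸ hle) (Nat.one_le_iff_ne_zero.2 hi)
  ext j
  rcases eq_or_ne j i with rfl | hj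
  · simp [hmi]
  · rw [Finsupp.single_eq_of_ne hj]
    by_contra hj0
    have hjmem : j ∈ m.support := Finsupp.mem_support_iff.2 hj0
    have : m i + m j ≤ m.degree := by
      have : ({i, j} : Finset (Fin n)) ⊆ m.support := by
        intro k hk
        simp only [Finset.mem_insert, Finset.mem_singleton] at hk
        rcases hk with rfl | rfl <;> assumption
      calc m i + m j = ∑ k ∈ ({i, j} : Finset (Fin n)), m k := by
            rw [Finset.sum_insert (by simpa using hj.symm), Finset.sum_singleton]
        _ ≤ m.degree := Finset.sum_le_sum_of_subset this
    omega

lemma eq_lin_of_homog1 {p : MvPolynomial (Fin n) ℂ} (hp : p.IsHomogeneous 1) :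
    p = lin (fun i => coeff (Finsupp.single i 1) p) := by
  apply MvPolynomial.ext
  intro m
  rcases eq_or_ne m.degree 1 with hm | hm
  · obtain ⟨i, rfl⟩ := degree_one_eq_single hm
    rw [coeff_lin]
  · rw [hp.coeff_eq_zero hm, ((lin_isHomogeneous _).coeff_eq_zero hm)]

/-- dot product -/
def dotc (p q : Fin n → ℂ) : ℂ := ∑ i, p i * q i

lemma contract_lin_lin (p q : Fin n → ℂ) :
    contract (lin p) (lin q) = C (dotc p q) := by
  rw [lin, contract_suml]
  have : ∀ i : Fin n, contract (p i • X i) (lin q) = C (p i * q i) := by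
    intro i
    rw [contract_smull, contract_X, lin, map_sum]
    rw [Finset.sum_eq_single i]
    · simp only [pderiv_X_self, smul_eq_C_mul, map_mul, coeff_smul]
      simp [smul_smul, ← C_eq_smul_one]
    · intro j _ hji
      simp [pderiv_X_of_ne hji]
    · simp
  rw [Finset.sum_congr rfl (fun i _ => this i), ← map_sum]
  rfl
lemma contract_lin_eq (p : Fin n → ℂ) (F : MvPolynomial (Fin n) ℂ) :
    contract (lin p) F = ∑ i, p i • pderiv i F := by
  rw [lin, contract_suml]
  exact Finset.sum_congr rfl fun i _ => by rw [contract_smull, contract_X]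

lemma contract_lin_mul (p : Fin n → ℂ) (f g : MvPolynomial (Fin n) ℂ) :
    contract (lin p) (f * g) = contract (lin p) f * g + f * contract (lin p) g := by
  simp only [contract_lin_eq, pderiv_mul, smul_add, Finset.sum_add_distrib]
  rw [Finset.sum_mul, Finset.mul_sum]
  simp [smul_mul_assoc, mul_smul_comm]

lemma contract_lin_C (p : Fin n → ℂ) (c : ℂ) :
    contract (lin p) (C c : MvPolynomial (Fin n) ℂ) = 0 := by
  simp [contract_lin_eq]

lemma contract_lin_adjoin (p : Fin n → ℂ) (V : Set (MvPolynomial (Fin n) ℂ))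
    (hV : ∀ v ∈ V, contract (lin p) v = 0) {G : MvPolynomial (Fin n) ℂ}
    (hG : G ∈ Algebra.adjoin ℂ V) : contract (lin p) G = 0 := by
  induction hG using Algebra.adjoin_induction with
  | mem v hv => exact hV v hv
  | algebraMap r => exact contract_lin_C p r
  | add a b _ _ ha hb => rw [contract_addr, ha, hb, add_zero]
  | mul a b _ _ ha hb => rw [contract_lin_mul, ha, hb, zero_mul, mul_zero, add_zero]

lemma Finsupp.degree_single_one (i : Fin n) : (Finsupp.single i 1 : Fin n →₀ ℕ).degree = 1 := by
  rw [Finsupp.degree_apply, Finsupp.support_single_ne_zero i one_ne_zero, Finset.sum_singleton,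
    Finsupp.single_eq_same]

lemma smul_isHomogeneous {k : ℕ} {F : MvPolynomial (Fin n) ℂ} (c : ℂ)
    (hF : F.IsHomogeneous k) : (c • F).IsHomogeneous k := by
  rw [← C_mul']
  simpa using (isHomogeneous_C (Fin n) c).mul hF

lemma IsHomogeneous.pderiv_mem {k : ℕ} {F : MvPolynomial (Fin n) ℂ}
    (hF : F.IsHomogeneous k) (i : Fin n) : (pderiv i F).IsHomogeneous (k - 1) := by
  rw [← mem_homogeneousSubmodule]
  have hFs : F = ∑ v ∈ F.support, monomial v (coeff v F) := (support_sum_monomial_coeff F).symm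
  rw [hFs, map_sum]
  apply Submodule.sum_mem
  intro m hm
  rw [pderiv_monomial, mem_homogeneousSubmodule]
  rcases Nat.eq_zero_or_pos (m i) with h0 | hpos
  · rw [h0]; simp [isHomogeneous_zero]
  · apply isHomogeneous_monomial
    have hdm : m.degree = k := by
      by_contra hne
      exact (Finsupp.mem_support_iff.1 hm) (hF.coeff_eq_zero hne)
    have hle : Finsupp.single i 1 ≤ m := by
      rw [Finsupp.single_le_iff]; exact hpos
    have hsum : (m - Finsupp.single i 1) + Finsupp.single i 1 = m := tsub_add_cancel_of_le hle
    have hdeg : (m - Finsupp.single i 1).degree + (Finsupp.single i 1).degree = m.degree := by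
      rw [Finsupp.degree_eq_weight_one, ← map_add, hsum]
    rw [Finsupp.degree_single_one] at hdeg
    omega

lemma contract_monomial_homog {d : ℕ} {F : MvPolynomial (Fin n) ℂ} (hF : F.IsHomogeneous d) :
    ∀ (e : ℕ) (m : Fin n →₀ ℕ) (c : ℂ), m.degree = e →
      (contract (monomial m c) F).IsHomogeneous (d - e) := by
  intro e
  induction e using Nat.strong_induction_on with
  | _ e IH =>
  intro m c hdeg
  rcases Nat.eq_zero_or_pos e with rfl | hpos
  · have hm0 : m = 0 := (Finsupp.degree_eq_zero_iff m).1 hdeg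
    subst hm0
    have hC : (monomial (0 : Fin n →₀ ℕ) c) = C c := by simp
    rw [hC, contract_C, Nat.sub_zero]
    exact smul_isHomogeneous c hF
  · have hm0 : m ≠ 0 := by
      intro h; rw [h, map_zero] at hdeg; omega
    obtain ⟨i, hi⟩ := Finsupp.ne_iff.1 hm0
    simp only [Finsupp.coe_zero, Pi.zero_apply] at hi
    have hle : Finsupp.single i 1 ≤ m := by
      rw [Finsupp.single_le_iff]; exact Nat.one_le_iff_ne_zero.2 hi
    have hsum : (m - Finsupp.single i 1) + Finsupp.single i 1 = m := tsub_add_cancel_of_le hle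
    have hdeg' : (m - Finsupp.single i 1).degree = e - 1 := by
      have h2 : (m - Finsupp.single i 1).degree + (Finsupp.single i 1).degree = m.degree := by
        rw [Finsupp.degree_eq_weight_one, ← map_add, hsum]
      rw [Finsupp.degree_single_one] at h2
      omega
    have hmono : (monomial m c : MvPolynomial (Fin n) ℂ)
        = X i * monomial (m - Finsupp.single i 1) c := by
      rw [X, monomial_mul, one_mul, add_comm, hsum]
    rw [hmono, contract_mull, contract_X]
    have hIH := IH (e - 1) (by omega) (m - Finsupp.single i 1) c hdeg'
    have := IsHomogeneous.pderiv_mem hIH i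
    have harith : d - (e - 1) - 1 = d - e := by omega
    rwa [harith] at this

lemma contract_homog {d e : ℕ} {F Θ : MvPolynomial (Fin n) ℂ} (hF : F.IsHomogeneous d)
    (hΘ : Θ.IsHomogeneous e) : contract Θ F ∈ homogeneousSubmodule (Fin n) ℂ (d - e) := by
  have hΘs : Θ = ∑ v ∈ Θ.support, monomial v (coeff v Θ) := (support_sum_monomial_coeff Θ).symm
  rw [hΘs, contract_suml]
  apply Submodule.sum_mem
  intro m hm
  rw [mem_homogeneousSubmodule]
  apply contract_monomial_homog hF e m _
  by_contra hne
  exact (Finsupp.mem_support_iff.1 hm) (hΘ.coeff_eq_zero hne)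
lemma Finsupp.degree_add' (a b : Fin n →₀ ℕ) : (a + b).degree = a.degree + b.degree := by
  simp only [Finsupp.degree_eq_weight_one, map_add]

lemma sum_hc (b : MvPolynomial (Fin n) ℂ) (M : ℕ) (h : b.totalDegree < M) :
    ∑ e ∈ Finset.range M, homogeneousComponent e b = b := by
  have h2 : ∑ e ∈ Finset.range (b.totalDegree + 1), homogeneousComponent e b
      = ∑ e ∈ Finset.range M, homogeneousComponent e b := by
    apply Finset.sum_subset (Finset.range_subset_range.2 (by omega))
    intro e _ he
    simp only [Finset.mem_range, not_lt] at he
    exact homogeneousComponent_eq_zero e b (by omega)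
  rw [← h2, sum_homogeneousComponent]

lemma apolar_low {d : ℕ} {F : MvPolynomial (Fin n) ℂ} (hF : F.IsHomogeneous d)
    (hd : 2 ≤ d) (hF0 : F ≠ 0) (hconc : Concise F) {b : MvPolynomial (Fin n) ℂ}
    (hb : contract b F = 0) :
    ∀ m : Fin n →₀ ℕ, m.degree ≤ 1 → coeff m b = 0 := by
  set M := b.totalDegree + 2 with hM
  have hsum : ∑ e ∈ Finset.range M, homogeneousComponent e b = b :=
    sum_hc b M (by omega)
  have hzero : ∑ e ∈ Finset.range M, contract (homogeneousComponent e b) F = 0 := by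
    rw [← contract_suml, hsum, hb]
  have key : ∀ k : ℕ, k ∈ Finset.range M →
      (∀ e ∈ Finset.range M, e ≠ k → d - k ≠ d - e) →
      contract (homogeneousComponent k b) F = 0 := by
    intro k hkmem hk
    have := congrArg (homogeneousComponent (d - k)) hzero
    rw [map_sum, map_zero] at this
    have hsum2 : ∑ x ∈ Finset.range M,
        homogeneousComponent (d - k) (contract (homogeneousComponent x b) F)
        = contract (homogeneousComponent k b) F := by
      rw [Finset.sum_eq_single_of_mem k hkmem]
      · rw [homogeneousComponent_of_mem
          (contract_homog hF (homogeneousComponent_isHomogeneous k b))]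
        exact if_pos rfl
      · intro e hemem hek
        rw [homogeneousComponent_of_mem
          (contract_homog hF (homogeneousComponent_isHomogeneous e b))]
        exact if_neg (hk e hemem hek)
    rw [← hsum2]
    exact this
  have h0 : contract (homogeneousComponent 0 b) F = 0 := by
    apply key 0 (by simp [hM])
    intro e _ he0
    have he1 : 1 ≤ e := Nat.one_le_iff_ne_zero.2 he0
    omega
  have h1 : contract (homogeneousComponent 1 b) F = 0 := by
    apply key 1 (by simp [hM])
    intro e _ he1
    rcases Nat.eq_zero_or_pos e with rfl | hpos
    · omega
    · have : 2 ≤ e := by omega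
      omega
  have hc0 : coeff 0 b = 0 := by
    rw [homogeneousComponent_zero, contract_C] at h0
    rcases smul_eq_zero.1 h0 with h | h
    · exact h
    · exact absurd h hF0
  have hc1 : homogeneousComponent 1 b = 0 :=
    hconc _ (homogeneousComponent_isHomogeneous 1 b) h1
  intro m hm
  interval_cases hdeg : m.degree
  · have : m = 0 := (Finsupp.degree_eq_zero_iff m).1 hdeg
    subst this; exact hc0
  · have := coeff_homogeneousComponent (σ := Fin n) (R := ℂ) (n := 1) (φ := b) m
    rw [hc1, if_pos hdeg] at this
    simp only [coeff_zero] at this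
    exact this.symm

lemma coeff_zero_of_mem_irr {a : MvPolynomial (Fin n) ℂ} (ha : a ∈ irrIdeal n) :
    coeff 0 a = 0 := by
  have hle : irrIdeal n ≤ RingHom.ker (constantCoeff (σ := Fin n) (R := ℂ)) := by
    rw [irrIdeal, Ideal.span_le]
    rintro _ ⟨i, rfl⟩
    simp [RingHom.mem_ker]
  have := hle ha
  rwa [RingHom.mem_ker, constantCoeff_eq] at this

lemma coeff_two_of_mem_mul {d : ℕ} {F : MvPolynomial (Fin n) ℂ} (hF : F.IsHomogeneous d)
    (hd : 2 ≤ d) (hF0 : F ≠ 0) (hconc : Concise F) {P : MvPolynomial (Fin n) ℂ}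
    (hP : P ∈ irrIdeal n * apolarIdeal F) :
    ∀ m : Fin n →₀ ℕ, m.degree = 2 → coeff m P = 0 := by
  refine Submodule.mul_induction_on hP ?_ ?_
  · intro a ha b hb m hm2
    rw [coeff_mul]
    apply Finset.sum_eq_zero
    rintro ⟨m1, m2⟩ hmem
    rw [Finset.HasAntidiagonal.mem_antidiagonal] at hmem
    have hdeg : m1.degree + m2.degree = 2 := by
      rw [← Finsupp.degree_add', hmem, hm2]
    rcases Nat.eq_zero_or_pos m1.degree with h0 | hpos
    · have : m1 = 0 := (Finsupp.degree_eq_zero_iff m1).1 h0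
      subst this
      rw [coeff_zero_of_mem_irr ha, zero_mul]
    · have : m2.degree ≤ 1 := by omega
      rw [apolar_low hF hd hF0 hconc hb m2 this, mul_zero]
  · intro x y ihx ihy m hm2
    rw [coeff_add, ihx m hm2, ihy m hm2, add_zero]
lemma lin_smul (c : ℂ) (w : Fin n → ℂ) : lin (c • w) = c • lin w := by
  simp [lin, Finset.smul_sum, smul_smul]

lemma contract_zerol (F : MvPolynomial (Fin n) ℂ) : contract 0 F = 0 := by
  simp [contract, map_zero]

lemma contract_smulr (a : MvPolynomial (Fin n) ℂ) (c : ℂ) (F : MvPolynomial (Fin n) ℂ) :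
    contract a (c • F) = c • contract a F := by
  simp [contract, map_smul]

lemma quad_pair (p q w z : Fin n → ℂ) :
    contract (lin p * lin q) (lin w * lin z)
      = C (dotc q w * dotc p z + dotc q z * dotc p w) := by
  rw [contract_mull, contract_lin_mul, contract_lin_lin, contract_lin_lin, contract_addr,
    C_mul', contract_smulr, contract_lin_lin, mul_comm (lin w), C_mul', contract_smulr,
    contract_lin_lin]
  rw [smul_eq_C_mul, smul_eq_C_mul, ← map_mul, ← map_mul, ← map_add]

lemma homog0_eq_C {F : MvPolynomial (Fin n) ℂ} (hF : F.IsHomogeneous 0) :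
    F = C (coeff 0 F) := by
  apply MvPolynomial.ext
  intro m
  rcases eq_or_ne m 0 with rfl | hm
  · simp
  · rw [hF.coeff_eq_zero (by simpa [Finsupp.degree_eq_zero_iff] using hm)]
    rw [coeff_C, if_neg (Ne.symm hm)]

section DualBasis

variable {ι : Type*} (bas : Module.Basis ι ℂ (Fin n → ℂ))

/-- Dual vector of a basis element w.r.t. the standard dot product. -/
def dualv (r : ι) : Fin n → ℂ := fun i => bas.coord r (Pi.single i 1)

lemma dotc_dualv (r : ι) (w : Fin n → ℂ) : dotc (dualv bas r) w = bas.coord r w := by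
  have hw : w = ∑ i, Pi.single i (w i) := (Finset.univ_sum_single w).symm
  rw [dotc]
  conv_rhs => rw [hw]
  rw [map_sum]
  apply Finset.sum_congr rfl
  intro i _
  have : (Pi.single i (w i) : Fin n → ℂ) = w i • (Pi.single i (1 : ℂ) : Fin n → ℂ) := by
    rw [← Pi.single_smul, smul_eq_mul, mul_one]
  rw [this, map_smul, dualv, smul_eq_mul, mul_comm]

lemma dotc_dualv_basis [DecidableEq ι] (r s : ι) :
    dotc (dualv bas r) (bas s) = if r = s then 1 else 0 := by
  rw [dotc_dualv, Module.Basis.coord_apply, Module.Basis.repr_self, Finsupp.single_apply, eq_comm]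
  simp [eq_comm]

end DualBasis

lemma contract_zeror (a : MvPolynomial (Fin n) ℂ) : contract a 0 = 0 := by
  simp [contract, map_zero]
/-- A concise direct sum in `n` variables has at least `n - 1` quadratic
minimal apolar generators. -/
theorem concise_direct_sum_quadratic_generators
    (n d : ℕ) (F : MvPolynomial (Fin n) ℂ) (hF : F.IsHomogeneous d)
    (hconc : Concise F) (hDS : IsDirectSum F d) :
    MinGensAtLeast (apolarIdeal F) 2 (n - 1) := by
  rcases Nat.lt_or_ge n 2 with hn | hn
  · refine ⟨fun _ => 0, fun i => ⟨(apolarIdeal F).zero_mem, isHomogeneous_zero _ _ _⟩, ?_⟩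
    intro c _ i
    have := i.isLt
    omega
  -- n ≥ 2 henceforth
  obtain ⟨V, G, hV1, hindep, hsup, hG, hFsum⟩ := hDS
  have hX0 : (X (⟨0, by omega⟩ : Fin n) : MvPolynomial (Fin n) ℂ) ≠ 0 := X_ne_zero _
  have hF0 : F ≠ 0 := by
    intro h
    apply hX0
    apply hconc _ (isHomogeneous_X _ _)
    rw [h]
    simp [contract, map_zero]
  have hd0 : d ≠ 0 := by
    rintro rfl
    apply hX0
    apply hconc _ (isHomogeneous_X _ _)
    rw [contract_X, homog0_eq_C hF]
    simp
  have hd : 2 ≤ d := by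
    rcases Nat.lt_or_ge d 2 with h2 | h2
    · exfalso
      have hd1 : d = 1 := by omega
      subst hd1
      have hFl := eq_lin_of_homog1 hF
      set f : Fin n → ℂ := fun i => coeff (Finsupp.single i 1) F with hf
      have hfne : f ≠ 0 := by
        intro h
        apply hF0
        rw [hFl, h]
        simp [lin]
      obtain ⟨j, hj⟩ := Function.ne_iff.1 hfne
      simp only [Pi.zero_apply] at hj
      obtain ⟨j', hj'⟩ : ∃ j' : Fin n, j' ≠ j := by
        rcases eq_or_ne j ⟨0, by omega⟩ with rfl | hne
        · exact ⟨⟨1, by omega⟩, by simp [Fin.ext_iff]⟩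
        · exact ⟨⟨0, by omega⟩, Ne.symm hne⟩
      set p : Fin n → ℂ := fun i => if i = j then f j' else if i = j' then -f j else 0 with hp
      have hdot : dotc p f = 0 := by
        rw [dotc, ← Finset.sum_subset (Finset.subset_univ ({j, j'} : Finset (Fin n)))]
        · rw [Finset.sum_pair (Ne.symm hj')]
          simp only [hp, if_pos rfl, hj', if_neg hj']
          simp
          ring
        · intro i _ hi
          simp only [Finset.mem_insert, Finset.mem_singleton, not_or] at hi
          simp [hp, hi.1, hi.2]
      have hlp : contract (lin p) F = 0 := by
        rw [hFl] at *
        rw [contract_lin_lin, hdot, map_zero]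
      have hlin0 := hconc _ (lin_isHomogeneous p) hlp
      have hpj' : p j' = 0 := by
        have h2 := congrArg (coeff (Finsupp.single j' 1)) hlin0
        rw [coeff_lin] at h2
        simpa using h2
      rw [hp] at hpj'
      simp only [if_neg hj', if_pos rfl] at hpj'
      simp at hpj'
      exact hj hpj'
    · exact h2
  -- V i are nonzero
  have hVne : ∀ i : Fin 2, V i ≠ ⊥ := by
    intro i hbot
    obtain ⟨hGne, hGhom, hGmem⟩ := hG i
    have hGbot : G i ∈ (⊥ : Subalgebra ℂ (MvPolynomial (Fin n) ℂ)) := by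
      have hle : Algebra.adjoin ℂ ((V i : Set (MvPolynomial (Fin n) ℂ))) ≤ ⊥ := by
        apply Algebra.adjoin_le
        rw [hbot]
        intro x hx
        simp only [Submodule.bot_coe, Set.mem_singleton_iff] at hx
        rw [hx]
        exact Subalgebra.zero_mem _
      exact hle hGmem
    rw [Algebra.mem_bot] at hGbot
    obtain ⟨c, hc⟩ := hGbot
    have hcne : c ≠ 0 := by
      rintro rfl
      apply hGne
      rw [← hc]
      simp
    have hcoeff : coeff 0 (G i) = c := by
      rw [← hc]
      simp [MvPolynomial.algebraMap_eq]
    have h0 : coeff 0 (G i) = 0 :=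
      hGhom.coeff_eq_zero (by rw [map_zero]; omega)
    rw [hcoeff] at h0
    exact hcne h0
  -- linear algebra setup
  let Lmap : (Fin n → ℂ) →ₗ[ℂ] MvPolynomial (Fin n) ℂ :=
    { toFun := lin, map_add' := lin_add, map_smul' := lin_smul }
  have hLinj : ∀ v w : Fin n → ℂ, lin v = lin w → v = w := by
    intro v w h
    funext i
    rw [← coeff_lin v i, ← coeff_lin w i, h]
  have hlin0 : lin (0 : Fin n → ℂ) = 0 := by simp [lin]
  let U : Fin 2 → Submodule ℂ (Fin n → ℂ) := fun i => (V i).comap Lmap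
  have hUmem : ∀ (i : Fin 2) (w : Fin n → ℂ), w ∈ U i ↔ lin w ∈ V i := fun i w => Iff.rfl
  have hdisj : Disjoint (V 0) (V 1) := hindep.pairwiseDisjoint (by decide)
  have hVsup : V 0 ⊔ V 1 = homogeneousSubmodule (Fin n) ℂ 1 := by
    rw [← hsup]
    apply le_antisymm (sup_le (le_iSup V 0) (le_iSup V 1))
    apply iSup_le
    intro i
    fin_cases i
    · exact le_sup_left
    · exact le_sup_right
  have hcompl : IsCompl (U 0) (U 1) := by
    constructor
    · rw [Submodule.disjoint_def]
      intro x hx0 hx1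
      have hx : lin x ∈ V 0 ⊓ V 1 := ⟨hx0, hx1⟩
      rw [hdisj.eq_bot, Submodule.mem_bot] at hx
      exact hLinj _ _ (by rw [hx, hlin0])
    · rw [codisjoint_iff, Submodule.eq_top_iff']
      intro x
      have hx : lin x ∈ V 0 ⊔ V 1 := by
        rw [hVsup]; exact lin_mem_hs1 x
      obtain ⟨y, hy, z, hz, hyz⟩ := Submodule.mem_sup.1 hx
      have hy1 := eq_lin_of_homog1 ((mem_homogeneousSubmodule _ _).1 (hV1 0 hy))
      have hz1 := eq_lin_of_homog1 ((mem_homogeneousSubmodule _ _).1 (hV1 1 hz))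
      have hxsplit : x = (fun i => coeff (Finsupp.single i 1) y)
          + (fun i => coeff (Finsupp.single i 1) z) := by
        apply hLinj
        rw [lin_add, ← hy1, ← hz1, hyz]
      rw [hxsplit]
      apply Submodule.add_mem
      · apply Submodule.mem_sup_left
        rw [hUmem, ← hy1]
        exact hy
      · apply Submodule.mem_sup_right
        rw [hUmem, ← hz1]
        exact hz
  have hUne : ∀ i : Fin 2, U i ≠ ⊥ := by
    intro i hUbot
    obtain ⟨v, hv, hvne⟩ := Submodule.exists_mem_ne_zero_of_ne_bot (hVne i)
    have hv1 := eq_lin_of_homog1 ((mem_homogeneousSubmodule _ _).1 (hV1 i hv))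
    have hw : (fun k => coeff (Finsupp.single k 1) v) ∈ U i := by
      rw [hUmem, ← hv1]; exact hv
    rw [hUbot, Submodule.mem_bot] at hw
    apply hvne
    rw [hv1, hw, hlin0]
  set a := Module.finrank ℂ (U 0) with ha
  set b := Module.finrank ℂ (U 1) with hb
  have hab : a + b = n := by
    have h := Submodule.finrank_add_eq_of_isCompl hcompl
    rwa [Module.finrank_fin_fun] at h
  have ha0 : 0 < a := by
    rw [ha, Module.finrank_pos_iff]
    exact Submodule.nontrivial_iff_ne_bot.2 (hUne 0)
  have hb0 : 0 < b := by
    rw [hb, Module.finrank_pos_iff]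
    exact Submodule.nontrivial_iff_ne_bot.2 (hUne 1)
  let b0 : Module.Basis (Fin a) ℂ (U 0) := Module.finBasis ℂ (U 0)
  let b1 : Module.Basis (Fin b) ℂ (U 1) := Module.finBasis ℂ (U 1)
  let eqv := Submodule.prodEquivOfIsCompl (U 0) (U 1) hcompl
  let bas : Module.Basis (Fin a ⊕ Fin b) ℂ (Fin n → ℂ) := (b0.prod b1).map eqv
  have hbl : ∀ i : Fin a, bas (Sum.inl i) = (b0 i : Fin n → ℂ) := by
    intro i
    show eqv ((b0.prod b1) (Sum.inl i)) = _
    rw [Module.Basis.prod_apply]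
    simp [eqv, Submodule.coe_prodEquivOfIsCompl']
  have hbr : ∀ j : Fin b, bas (Sum.inr j) = (b1 j : Fin n → ℂ) := by
    intro j
    show eqv ((b0.prod b1) (Sum.inr j)) = _
    rw [Module.Basis.prod_apply]
    simp [eqv, Submodule.coe_prodEquivOfIsCompl']
  -- coordinate functionals vanish on the complementary subspace
  have hcoord_inl : ∀ (i : Fin a) (w : Fin n → ℂ), w ∈ U 1 → bas.coord (Sum.inl i) w = 0 := by
    intro i w hw
    have hU1span : U 1 = Submodule.span ℂ (Set.range fun j : Fin b => bas (Sum.inr j)) := by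
      have h1 : (Set.range fun j : Fin b => bas (Sum.inr j))
          = (U 1).subtype '' Set.range b1 := by
        ext x
        constructor
        · rintro ⟨j, rfl⟩; exact ⟨b1 j, ⟨j, rfl⟩, (hbr j).symm⟩
        · rintro ⟨y, ⟨j, rfl⟩, rfl⟩; exact ⟨j, hbr j⟩
      rw [h1, ← Submodule.map_span, b1.span_eq, Submodule.map_top, Submodule.range_subtype]
    have hker : Submodule.span ℂ (Set.range fun j : Fin b => bas (Sum.inr j))
        ≤ LinearMap.ker (bas.coord (Sum.inl i)) := by
      rw [Submodule.span_le]
      rintro _ ⟨j, rfl⟩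
      rw [SetLike.mem_coe, LinearMap.mem_ker, Module.Basis.coord_apply, Module.Basis.repr_self,
        Finsupp.single_apply, if_neg (by simp)]
    have := hker (hU1span ▸ hw)
    rwa [LinearMap.mem_ker] at this
  have hcoord_inr : ∀ (j : Fin b) (w : Fin n → ℂ), w ∈ U 0 → bas.coord (Sum.inr j) w = 0 := by
    intro j w hw
    have hU0span : U 0 = Submodule.span ℂ (Set.range fun i : Fin a => bas (Sum.inl i)) := by
      have h1 : (Set.range fun i : Fin a => bas (Sum.inl i))
          = (U 0).subtype '' Set.range b0 := by
        ext x
        constructor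
        · rintro ⟨i, rfl⟩; exact ⟨b0 i, ⟨i, rfl⟩, (hbl i).symm⟩
        · rintro ⟨y, ⟨i, rfl⟩, rfl⟩; exact ⟨i, hbl i⟩
      rw [h1, ← Submodule.map_span, b0.span_eq, Submodule.map_top, Submodule.range_subtype]
    have hker : Submodule.span ℂ (Set.range fun i : Fin a => bas (Sum.inl i))
        ≤ LinearMap.ker (bas.coord (Sum.inr j)) := by
      rw [Submodule.span_le]
      rintro _ ⟨i, rfl⟩
      rw [SetLike.mem_coe, LinearMap.mem_ker, Module.Basis.coord_apply, Module.Basis.repr_self,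
        Finsupp.single_apply, if_neg (by simp)]
    have := hker (hU0span ▸ hw)
    rwa [LinearMap.mem_ker] at this
  -- the dual linear forms kill the corresponding pieces
  have hkill0 : ∀ (j : Fin b) (v : MvPolynomial (Fin n) ℂ), v ∈ V 0 →
      contract (lin (dualv bas (Sum.inr j))) v = 0 := by
    intro j v hv
    have hv1 := eq_lin_of_homog1 ((mem_homogeneousSubmodule _ _).1 (hV1 0 hv))
    have hw : (fun k => coeff (Finsupp.single k 1) v) ∈ U 0 := by
      rw [hUmem, ← hv1]; exact hv
    rw [hv1, contract_lin_lin, dotc_dualv, hcoord_inr j _ hw, map_zero]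
  have hkill1 : ∀ (i : Fin a) (v : MvPolynomial (Fin n) ℂ), v ∈ V 1 →
      contract (lin (dualv bas (Sum.inl i))) v = 0 := by
    intro i v hv
    have hv1 := eq_lin_of_homog1 ((mem_homogeneousSubmodule _ _).1 (hV1 1 hv))
    have hw : (fun k => coeff (Finsupp.single k 1) v) ∈ U 1 := by
      rw [hUmem, ← hv1]; exact hv
    rw [hv1, contract_lin_lin, dotc_dualv, hcoord_inl i _ hw, map_zero]
  -- the quadrics lie in the apolar ideal
  have hFG : F = G 0 + G 1 := by rw [hFsum, Fin.sum_univ_two]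
  have hQmem : ∀ (i : Fin a) (j : Fin b),
      lin (dualv bas (Sum.inl i)) * lin (dualv bas (Sum.inr j)) ∈ apolarIdeal F := by
    intro i j
    rw [mem_apolarIdeal, hFG, contract_addr]
    have h0 : contract (lin (dualv bas (Sum.inl i)) * lin (dualv bas (Sum.inr j))) (G 0) = 0 := by
      rw [contract_mull,
        contract_lin_adjoin _ _ (fun v hv => hkill0 j v hv) (hG 0).2.2, contract_zeror]
    have h1 : contract (lin (dualv bas (Sum.inl i)) * lin (dualv bas (Sum.inr j))) (G 1) = 0 := by
      rw [mul_comm, contract_mull,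
        contract_lin_adjoin _ _ (fun v hv => hkill1 i v hv) (hG 1).2.2, contract_zeror]
    rw [h0, h1, add_zero]
  -- the family of quadrics
  let Θfam : Fin (n - 1) → MvPolynomial (Fin n) ℂ := fun k =>
    if h : (k : ℕ) < a then
      lin (dualv bas (Sum.inl ⟨k, h⟩)) * lin (dualv bas (Sum.inr ⟨0, hb0⟩))
    else
      lin (dualv bas (Sum.inl ⟨0, ha0⟩)) *
        lin (dualv bas (Sum.inr ⟨(k : ℕ) + 1 - a, by have := k.isLt; omega⟩))
  have hΘhom : ∀ k, (Θfam k).IsHomogeneous 2 := by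
    intro k
    show (Θfam k).IsHomogeneous (1 + 1)
    by_cases h : (k : ℕ) < a
    · rw [show Θfam k = _ from dif_pos h]
      exact (lin_isHomogeneous _).mul (lin_isHomogeneous _)
    · rw [show Θfam k = _ from dif_neg h]
      exact (lin_isHomogeneous _).mul (lin_isHomogeneous _)
  have hΘmem : ∀ k, Θfam k ∈ apolarIdeal F := by
    intro k
    by_cases h : (k : ℕ) < a
    · rw [show Θfam k = _ from dif_pos h]; exact hQmem _ _
    · rw [show Θfam k = _ from dif_neg h]; exact hQmem _ _
  refine ⟨Θfam, fun k => ⟨hΘmem k, hΘhom k⟩, ?_⟩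
  intro c hcmem k
  -- the sum is zero
  have hPmem2 : (∑ k', c k' • Θfam k') ∈ homogeneousSubmodule (Fin n) ℂ 2 :=
    Submodule.sum_mem _ fun k' _ =>
      Submodule.smul_mem _ _ ((mem_homogeneousSubmodule _ _).2 (hΘhom k'))
  have hP0 : (∑ k', c k' • Θfam k') = 0 := by
    apply MvPolynomial.ext
    intro m
    rw [coeff_zero]
    rcases eq_or_ne m.degree 2 with hm2 | hm2
    · exact coeff_two_of_mem_mul hF hd hF0 hconc hcmem m hm2
    · exact ((mem_homogeneousSubmodule _ _).1 hPmem2).coeff_eq_zero hm2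
  -- pairing computation
  have hval : ∀ (r s w z : Fin a ⊕ Fin b),
      contract (lin (dualv bas r) * lin (dualv bas s)) (lin (bas w) * lin (bas z))
        = C ((if s = w then (1 : ℂ) else 0) * (if r = z then (1 : ℂ) else 0)
            + (if s = z then (1 : ℂ) else 0) * (if r = w then (1 : ℂ) else 0)) := by
    intro r s w z
    rw [quad_pair, dotc_dualv_basis, dotc_dualv_basis, dotc_dualv_basis, dotc_dualv_basis]
  have hpair : ∀ w z : Fin a ⊕ Fin b,
      ∑ k', c k' • contract (Θfam k') (lin (bas w) * lin (bas z)) = 0 := by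
    intro w z
    have h := congrArg (fun Q => contract Q (lin (bas w) * lin (bas z))) hP0
    simp only [contract_zerol] at h
    rw [← h, contract_suml]
    apply Finset.sum_congr rfl
    intro k' _
    rw [contract_smull]
  -- conclude
  by_cases hk : (k : ℕ) < a
  · have h := hpair (Sum.inl ⟨k, hk⟩) (Sum.inr ⟨0, hb0⟩)
    rw [Finset.sum_eq_single k] at h
    · rw [show Θfam k = _ from dif_pos hk, hval] at h
      simpa using h
    · intro k' _ hk'
      by_cases hk'a : (k' : ℕ) < a
      · rw [show Θfam k' = _ from dif_pos hk'a, hval]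
        have hne : (Sum.inl (⟨k', hk'a⟩ : Fin a) : Fin a ⊕ Fin b) ≠ Sum.inl ⟨k, hk⟩ := by
          simp only [ne_eq, Sum.inl.injEq, Fin.mk.injEq]
          intro hh
          exact hk' (Fin.ext hh)
        rw [if_neg (by simp), if_neg hne]
        simp
      · rw [show Θfam k' = _ from dif_neg hk'a, hval]
        have hne : (Sum.inr (⟨(k' : ℕ) + 1 - a, by have := k'.isLt; omega⟩ : Fin b)
            : Fin a ⊕ Fin b) ≠ Sum.inr ⟨0, hb0⟩ := by
          simp only [ne_eq, Sum.inr.injEq, Fin.mk.injEq]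
          omega
        rw [if_neg (by simp), if_neg hne]
        simp
    · intro hmem
      exact absurd (Finset.mem_univ k) hmem
  · have hkb : (k : ℕ) + 1 - a < b := by have := k.isLt; omega
    have h := hpair (Sum.inl ⟨0, ha0⟩) (Sum.inr ⟨(k : ℕ) + 1 - a, hkb⟩)
    rw [Finset.sum_eq_single k] at h
    · rw [show Θfam k = _ from dif_neg hk, hval] at h
      simpa using h
    · intro k' _ hk'
      by_cases hk'a : (k' : ℕ) < a
      · rw [show Θfam k' = _ from dif_pos hk'a, hval]
        have hne : (Sum.inr (⟨0, hb0⟩ : Fin b) : Fin a ⊕ Fin b)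
            ≠ Sum.inr ⟨(k : ℕ) + 1 - a, hkb⟩ := by
          simp only [ne_eq, Sum.inr.injEq, Fin.mk.injEq]
          omega
        rw [if_neg (by simp), if_neg hne]
        simp
      · rw [show Θfam k' = _ from dif_neg hk'a, hval]
        have hne : (Sum.inr (⟨(k' : ℕ) + 1 - a, by have := k'.isLt; omega⟩ : Fin b)
            : Fin a ⊕ Fin b) ≠ Sum.inr ⟨(k : ℕ) + 1 - a, hkb⟩ := by
          simp only [ne_eq, Sum.inr.injEq, Fin.mk.injEq]
          intro hh
          exact hk' (Fin.ext (by omega))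
        rw [if_neg (by simp), if_neg hne]
        simp
    · intro hmem
      exact absurd (Finset.mem_univ k) hmem
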